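/- Radial coercivity of the self-similar transport field of the profile and exponential escape of its trajectories: Let W̄ : ℝ³ → ℝ be defined by W̄(y) = B(y̌)^{−1/2} W₁d( B(y̌)^{3/2} y₁ ), where y̌ = (y₂,y₃) and B(y̌) = 1/(1 + y₂² + y₃²). Then: (i) |W̄(y)| ≤ |y₁| for every y ∈ ℝ³; (ii) for every y ∈ ℝ³, y₁( (3/2)y₁ + W̄(y) ) + (1/2)y₂² + (1/2)y₃² ≥ (1/2)|y|², where |y|² = y₁² + y₂² + y₃²; (iii) consequently, if s₀ ∈ ℝ and Φ : [s₀, ∞) → ℝ³ is a C¹ solution of the trajectory ODE Φ′(s) = ( (3/2)Φ₁(s) + W̄(Φ(s)), (1/2)Φ₂(s), (1/2)Φ₃(s) ), then |Φ(s)| ≥ |Φ(s₀)| e^{(s−s₀)/2} for all s ≥ s₀; in particular every trajectory starting away from the origin escapes to spatial infinity exponentially fast. -/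

import Mathlib

noncomputable section

/-- Points of self-similar space `ℝ³`. -/
abbrev V3 : Type := Fin 3 → ℝ

/-- The stable self-similar profile of the 1D Burgers equation. -/
def W1d (y : ℝ) : ℝ :=
  (-y / 2 + Real.sqrt (1 / 27 + y ^ 2 / 4)) ^ ((1 : ℝ) / 3)
    - (y / 2 + Real.sqrt (1 / 27 + y ^ 2 / 4)) ^ ((1 : ℝ) / 3)

/-- `B(y̌) = 1/(1 + y₂² + y₃²)`. -/
def Bf (y : V3) : ℝ := 1 / (1 + y 1 ^ 2 + y 2 ^ 2)

/-- The explicit 3D self-similar Burgers profile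
`W̄(y) = B(y̌)^{−1/2} W₁d(B(y̌)^{3/2} y₁)`. -/
def Wbar (y : V3) : ℝ :=
  Bf y ^ (-(1 : ℝ) / 2) * W1d (Bf y ^ ((3 : ℝ) / 2) * y 0)

/-- The Euclidean norm on `ℝ³`. -/
def eNorm3 (y : V3) : ℝ := Real.sqrt (y 0 ^ 2 + y 1 ^ 2 + y 2 ^ 2)

/-- The self-similar transport velocity of the profile:
`V(y) = ((3/2)y₁ + W̄(y), (1/2)y₂, (1/2)y₃)`. -/
def burgersField (y : V3) : V3 :=
  ![3 / 2 * y 0 + Wbar y, 1 / 2 * y 1, 1 / 2 * y 2]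

lemma W1d_cubic (y : ℝ) : W1d y ^ 3 + W1d y + y = 0 := by
  set s := Real.sqrt (1 / 27 + y ^ 2 / 4) with hs
  have hs2 : s ^ 2 = 1 / 27 + y ^ 2 / 4 := Real.sq_sqrt (by positivity)
  have hsy : |y| / 2 < s := by
    nlinarith [Real.sqrt_nonneg (1 / 27 + y ^ 2 / 4), abs_nonneg y, sq_abs y]
  have ha : (0:ℝ) < -y / 2 + s := by
    have := le_abs_self y; linarith
  have hb : (0:ℝ) < y / 2 + s := by
    have := neg_abs_le y; linarith
  set a := -y / 2 + s
  set b := y / 2 + s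
  have hab : a * b = 1 / 27 := by
    have : a * b = s ^ 2 - y ^ 2 / 4 := by ring
    rw [this, hs2]; ring
  set A := a ^ ((1:ℝ)/3) with hA
  set B := b ^ ((1:ℝ)/3) with hB
  have hA3 : A ^ 3 = a := by
    rw [hA, ← Real.rpow_natCast (a ^ ((1:ℝ)/3)) 3, ← Real.rpow_mul ha.le]
    norm_num
  have hB3 : B ^ 3 = b := by
    rw [hB, ← Real.rpow_natCast (b ^ ((1:ℝ)/3)) 3, ← Real.rpow_mul hb.le]
    norm_num
  have hAB : A * B = 1 / 3 := by
    rw [hA, hB, ← Real.mul_rpow ha.le hb.le, hab]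
    rw [show (1/27 : ℝ) = (1/3 : ℝ) ^ (3:ℕ) by norm_num,
      ← Real.rpow_natCast ((1:ℝ)/3) 3, ← Real.rpow_mul (by norm_num)]
    norm_num
  have hW : W1d y = A - B := rfl
  have haby : a - b = -y := by simp [a, b]; ring_nf
  rw [hW]
  linear_combination hA3 - hB3 - 3 * (A - B) * hAB - haby

lemma abs_W1d_le (y : ℝ) : |W1d y| ≤ |y| := by
  have h := W1d_cubic y
  set W := W1d y
  have h2 : |y| = |W| * (1 + W ^ 2) := by
    have h1 : y = -(W * (1 + W ^ 2)) := by linarith [h]; 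
    rw [h1, abs_neg, abs_mul, abs_of_nonneg (by positivity : (0:ℝ) ≤ 1 + W ^ 2)]
  nlinarith [abs_nonneg W, sq_nonneg W]

lemma abs_Wbar_le (y : V3) : |Wbar y| ≤ |y 0| := by
  have hBpos : 0 < Bf y := by
    have : (0:ℝ) < 1 + y 1 ^ 2 + y 2 ^ 2 := by positivity
    exact div_pos one_pos this
  have hB1 : Bf y ≤ 1 := by
    rw [Bf, div_le_one (by positivity)]; nlinarith [sq_nonneg (y 1), sq_nonneg (y 2)]
  have h1 : |Wbar y| ≤ Bf y ^ (-(1:ℝ)/2) * (Bf y ^ ((3:ℝ)/2) * |y 0|) := by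
    rw [Wbar, abs_mul, abs_of_nonneg (Real.rpow_nonneg hBpos.le _)]
    refine mul_le_mul_of_nonneg_left ?_ (Real.rpow_nonneg hBpos.le _)
    calc |W1d (Bf y ^ ((3:ℝ)/2) * y 0)| ≤ |Bf y ^ ((3:ℝ)/2) * y 0| := abs_W1d_le _
      _ = Bf y ^ ((3:ℝ)/2) * |y 0| := by
          rw [abs_mul, abs_of_nonneg (Real.rpow_nonneg hBpos.le _)]
  have h2 : Bf y ^ (-(1:ℝ)/2) * Bf y ^ ((3:ℝ)/2) = Bf y := by
    rw [← Real.rpow_add hBpos]; norm_num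
  calc |Wbar y| ≤ Bf y * |y 0| := by rw [← h2]; linarith [h1, mul_assoc (Bf y ^ (-(1:ℝ)/2)) (Bf y ^ ((3:ℝ)/2)) (|y 0|)]
    _ ≤ 1 * |y 0| := mul_le_mul_of_nonneg_right hB1 (abs_nonneg _)
    _ = |y 0| := one_mul _

lemma coercive (y : V3) :
    1 / 2 * (y 0 ^ 2 + y 1 ^ 2 + y 2 ^ 2) ≤
      y 0 * (3 / 2 * y 0 + Wbar y) + 1 / 2 * y 1 ^ 2 + 1 / 2 * y 2 ^ 2 := by
  have h1 : -(y 0 ^ 2) ≤ y 0 * Wbar y := by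
    have h2 : |y 0 * Wbar y| ≤ y 0 ^ 2 := by
      rw [abs_mul]
      calc |y 0| * |Wbar y| ≤ |y 0| * |y 0| :=
            mul_le_mul_of_nonneg_left (abs_Wbar_le y) (abs_nonneg _)
        _ = y 0 ^ 2 := by rw [← abs_mul, ← sq, abs_sq]
    linarith [neg_abs_le (y 0 * Wbar y)]
  nlinarith

/-- Radial coercivity of the self-similar transport field of the profile and exponential
escape of its trajectories: `|W̄(y)| ≤ |y₁|`, the field satisfies
`y·V(y) ≥ |y|²/2`, and hence any `C¹` trajectory of the field on `[s₀,∞)` satisfies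
`|Φ(s)| ≥ |Φ(s₀)| e^{(s−s₀)/2}`. -/
theorem burgersField_coercive_and_trajectories_escape :
    (∀ y : V3, |Wbar y| ≤ |y 0|) ∧
    (∀ y : V3,
      1 / 2 * (y 0 ^ 2 + y 1 ^ 2 + y 2 ^ 2) ≤
        y 0 * (3 / 2 * y 0 + Wbar y) + 1 / 2 * y 1 ^ 2 + 1 / 2 * y 2 ^ 2) ∧
    (∀ s₀ : ℝ, ∀ Φ : ℝ → V3,
      (∀ s ∈ Set.Ici s₀, HasDerivWithinAt Φ (burgersField (Φ s)) (Set.Ici s₀) s) →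
      ∀ s ∈ Set.Ici s₀, eNorm3 (Φ s₀) * Real.exp ((s - s₀) / 2) ≤ eNorm3 (Φ s)) := by

  refine ⟨abs_Wbar_le, coercive, ?_⟩
  intro s₀ Φ hΦ s hs
  set g : ℝ → ℝ := fun s => (Φ s 0) ^ 2 + (Φ s 1) ^ 2 + (Φ s 2) ^ 2 with hgdef
  set g' : ℝ → ℝ := fun s =>
    2 * Φ s 0 * burgersField (Φ s) 0 + 2 * Φ s 1 * burgersField (Φ s) 1
      + 2 * Φ s 2 * burgersField (Φ s) 2 with hg'def
  have hgderiv : ∀ t ∈ Set.Ici s₀, HasDerivWithinAt g (g' t) (Set.Ici s₀) t := by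
    intro t ht
    have hi := hasDerivWithinAt_pi.mp (hΦ t ht)
    have h0 := ((hi 0).mul (hi 0)).add (((hi 1).mul (hi 1)).add ((hi 2).mul (hi 2)))
    have e : g = ((fun x => Φ x 0) * fun x => Φ x 0) + (((fun x => Φ x 1) * fun x => Φ x 1) + (fun x => Φ x 2) * fun x => Φ x 2) := by
      funext x; simp only [hgdef, Pi.add_apply, Pi.mul_apply]; ring
    rw [e]; exact h0.congr_deriv (by simp only [hg'def]; ring)
  have hgg' : ∀ t ∈ Set.Ici s₀, g t ≤ g' t := by
    intro t ht
    have := coercive (Φ t)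
    simp only [hg'def, hgdef, burgersField]
    simp [Matrix.cons_val_zero, Matrix.cons_val_one]
    nlinarith [coercive (Φ t)]
  set h : ℝ → ℝ := fun s => g s * Real.exp (s₀ - s) with hhdef
  have hhderiv : ∀ t ∈ Set.Ici s₀,
      HasDerivWithinAt h ((g' t - g t) * Real.exp (s₀ - t)) (Set.Ici s₀) t := by
    intro t ht
    have he : HasDerivWithinAt (fun u => Real.exp (s₀ - u)) (-Real.exp (s₀ - t)) (Set.Ici s₀) t := by
      have := (((hasDerivAt_id t).const_sub s₀).exp).hasDerivWithinAt (s := Set.Ici s₀)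
      simpa using this
    have := (hgderiv t ht).mul he
    exact this.congr_deriv (by ring)
  have hmono : MonotoneOn h (Set.Ici s₀) := by
    apply monotoneOn_of_deriv_nonneg (convex_Ici s₀)
    · exact fun t ht => (hhderiv t ht).continuousWithinAt
    · intro t ht
      rw [interior_Ici] at ht
      exact ((hhderiv t (show s₀ ≤ t from le_of_lt ht)).hasDerivAt (Ici_mem_nhds ht)).differentiableAt.differentiableWithinAt
    · intro t ht
      rw [interior_Ici] at ht
      rw [((hhderiv t (show s₀ ≤ t from le_of_lt ht)).hasDerivAt (Ici_mem_nhds ht)).deriv]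
      have := hgg' t (show s₀ ≤ t from le_of_lt ht)
      have : 0 ≤ g' t - g t := by linarith
      positivity
  have hkey : g s₀ * Real.exp (s - s₀) ≤ g s := by
    have h1 : h s₀ ≤ h s := hmono (Set.self_mem_Ici) hs hs
    simp only [hhdef, sub_self, Real.exp_zero, mul_one] at h1
    have h2 : Real.exp (s₀ - s) * Real.exp (s - s₀) = 1 := by
      rw [← Real.exp_add]; norm_num
    have hepos : 0 < Real.exp (s - s₀) := Real.exp_pos _
    calc g s₀ * Real.exp (s - s₀) ≤ (g s * Real.exp (s₀ - s)) * Real.exp (s - s₀) :=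
          mul_le_mul_of_nonneg_right h1 hepos.le
      _ = g s := by rw [mul_assoc, h2, mul_one]
  have hg0 : (0:ℝ) ≤ g s₀ := by positivity
  have := Real.sqrt_le_sqrt hkey
  rw [Real.sqrt_mul hg0, ← Real.exp_half] at this
  simpa [eNorm3, hgdef] using this
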